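/- (Welch bound) If v_1, ..., v_N ∈ C^r are unit vectors with N > r, then the maximum over i ≠ j of |⟨v_i, v_j⟩| is at least sqrt((N - r)/(r(N - 1))). -/

import Mathlib

open BigOperators Finset

private theorem sum4_comm' {M : Type*} [AddCommMonoid M] (n m : ℕ)
    (F : Fin n → Fin n → Fin m → Fin m → M) :
    ∑ i, ∑ j, ∑ k, ∑ l, F i j k l = ∑ k, ∑ l, ∑ i, ∑ j, F i j k l :=
  calc ∑ i, ∑ j, ∑ k, ∑ l, F i j k l
      = ∑ i, ∑ k, ∑ j, ∑ l, F i j k l :=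
        Finset.sum_congr rfl fun _ _ => Finset.sum_comm
    _ = ∑ k, ∑ i, ∑ j, ∑ l, F i j k l := Finset.sum_comm
    _ = ∑ k, ∑ i, ∑ l, ∑ j, F i j k l :=
        Finset.sum_congr rfl fun _ _ => Finset.sum_congr rfl fun _ _ => Finset.sum_comm
    _ = ∑ k, ∑ l, ∑ i, ∑ j, F i j k l :=
        Finset.sum_congr rfl fun _ _ => Finset.sum_comm

private theorem conj_mul_re (z : ℂ) : ((starRingEnd ℂ) z * z).re = ‖z‖ ^ 2 := by
  rw [RCLike.conj_mul]
  norm_cast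

/-- Welch bound. -/
theorem stmt_1 (N r : ℕ) (hr : 1 ≤ r) (hN : 2 ≤ N) (hNr : r < N)
    (v : Fin N → Fin r → ℂ)
    (hunit : ∀ i, ∑ k, ‖v i k‖ ^ 2 = 1) :
    ∃ i j : Fin N, i ≠ j ∧
      Real.sqrt (((N : ℝ) - (r : ℝ)) / ((r : ℝ) * ((N : ℝ) - 1)))
        ≤ ‖∑ k, (starRingEnd ℂ) (v i k) * v j k‖ := by
  set c : Fin N → Fin N → ℂ := fun i j => ∑ k, (starRingEnd ℂ) (v i k) * v j k with hc
  set A : Fin r → Fin r → ℂ := fun k l => ∑ i, v i k * (starRingEnd ℂ) (v i l) with hA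
  -- key complex identity
  have key : (∑ i, ∑ j, (starRingEnd ℂ) (c i j) * c i j)
      = ∑ k, ∑ l, (starRingEnd ℂ) (A k l) * A k l := by
    simp only [hc, hA, map_sum, map_mul, Complex.conj_conj, Finset.sum_mul_sum]
    rw [sum4_comm']
    rw [Finset.sum_comm]
    refine Finset.sum_congr rfl fun k _ => Finset.sum_congr rfl fun l _ =>
      Finset.sum_congr rfl fun a _ => Finset.sum_congr rfl fun b _ => ?_
    ring
  -- real version
  have hsum : ∑ i, ∑ j, ‖c i j‖ ^ 2 = ∑ k, ∑ l, ‖A k l‖ ^ 2 := by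
    have h := congrArg Complex.re key
    simpa only [Complex.re_sum, conj_mul_re] using h
  -- trace
  have hAkk : ∀ k, (A k k).re = ∑ i, ‖v i k‖ ^ 2 := by
    intro k
    rw [hA]
    simp only [Complex.re_sum]
    refine Finset.sum_congr rfl fun i _ => ?_
    rw [mul_comm, conj_mul_re]
  have htr : ∑ k, (A k k).re = (N : ℝ) := by
    simp only [hAkk]
    rw [Finset.sum_comm]
    simp only [hunit]
    simp
  -- Cauchy-Schwarz step
  have hr0 : (0:ℝ) < r := by exact_mod_cast hr
  have hCS : (N : ℝ) ^ 2 ≤ (r : ℝ) * ∑ k, ∑ l, ‖A k l‖ ^ 2 := by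
    calc (N : ℝ) ^ 2 = (∑ k, (A k k).re) ^ 2 := by rw [htr]
      _ ≤ (Finset.univ : Finset (Fin r)).card * ∑ k, (A k k).re ^ 2 :=
          sq_sum_le_card_mul_sum_sq
      _ = (r : ℝ) * ∑ k, (A k k).re ^ 2 := by simp
      _ ≤ (r : ℝ) * ∑ k, ∑ l, ‖A k l‖ ^ 2 := by
          refine mul_le_mul_of_nonneg_left ?_ (le_of_lt hr0)
          refine Finset.sum_le_sum fun k _ => ?_
          calc (A k k).re ^ 2 ≤ ‖A k k‖ ^ 2 := by
                have h1 := Complex.abs_re_le_norm (A k k)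
                nlinarith [abs_nonneg (A k k).re, sq_abs (A k k).re]
            _ ≤ ∑ l, ‖A k l‖ ^ 2 :=
                Finset.single_le_sum (f := fun l => ‖A k l‖ ^ 2)
                  (fun l _ => by positivity) (mem_univ k)
  -- diagonal of c is 1
  have hcii : ∀ i, c i i = 1 := by
    intro i
    show (∑ k, (starRingEnd ℂ) (v i k) * v i k) = 1
    have : ∀ k, (starRingEnd ℂ) (v i k) * v i k = ((‖v i k‖ ^ 2 : ℝ) : ℂ) := by
      intro k; rw [RCLike.conj_mul]; norm_cast
    rw [Finset.sum_congr rfl fun k _ => this k, ← Complex.ofReal_sum, hunit]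
    norm_num
  -- split sum into diagonal and off-diagonal
  have hdiag : ∑ p ∈ (univ : Finset (Fin N)).diag, ‖c p.1 p.2‖ ^ 2 = (N : ℝ) := by
    have hdeq : (univ : Finset (Fin N)).diag = univ.image (fun i => (i, i)) := by
      ext ⟨a, b⟩
      simp only [Finset.mem_diag, Finset.mem_image, mem_univ, true_and]
      constructor
      · rintro rfl; exact ⟨a, rfl⟩
      · rintro ⟨x, hx⟩; cases hx; rfl
    rw [hdeq, Finset.sum_image (fun x _ y _ h => (Prod.mk.inj h).1)]
    simp [hcii]
  have hsplit : ∑ p ∈ (univ : Finset (Fin N)).diag, ‖c p.1 p.2‖ ^ 2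
      + ∑ p ∈ (univ : Finset (Fin N)).offDiag, ‖c p.1 p.2‖ ^ 2
      = ∑ i, ∑ j, ‖c i j‖ ^ 2 := by
    rw [← Finset.sum_union (Finset.disjoint_diag_offDiag _), Finset.diag_union_offDiag,
      Finset.sum_product]
  -- off-diagonal sum lower bound
  have hOff : (N : ℝ) ^ 2 / r - N ≤ ∑ p ∈ (univ : Finset (Fin N)).offDiag, ‖c p.1 p.2‖ ^ 2 := by
    have h1 : (N : ℝ) ^ 2 / r ≤ ∑ i, ∑ j, ‖c i j‖ ^ 2 := by
      rw [div_le_iff₀ hr0, hsum]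
      linarith [hCS]
    linarith [hsplit, hdiag]
  -- conclude by contradiction
  by_contra hcon
  push_neg at hcon
  set t : ℝ := Real.sqrt (((N : ℝ) - (r : ℝ)) / ((r : ℝ) * ((N : ℝ) - 1))) with ht
  have hN1 : (1:ℝ) < (N : ℝ) := by
    have : (2:ℝ) ≤ (N:ℝ) := by exact_mod_cast hN
    linarith
  have hNr' : (r:ℝ) < (N:ℝ) := by exact_mod_cast hNr
  have ht2 : t ^ 2 = ((N : ℝ) - r) / ((r : ℝ) * ((N : ℝ) - 1)) := by
    rw [ht, Real.sq_sqrt]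
    apply div_nonneg (by linarith) (by nlinarith)
  -- off diagonal nonempty
  have hne : ((univ : Finset (Fin N)).offDiag).Nonempty := by
    refine ⟨(⟨0, by omega⟩, ⟨1, by omega⟩), ?_⟩
    rw [Finset.mem_offDiag]
    refine ⟨mem_univ _, mem_univ _, ?_⟩
    intro h
    have := congrArg Fin.val h
    simp at this
  have hlt : ∑ p ∈ (univ : Finset (Fin N)).offDiag, ‖c p.1 p.2‖ ^ 2
      < ((univ : Finset (Fin N)).offDiag.card : ℝ) * t ^ 2 := by
    have := Finset.sum_lt_sum_of_nonempty hne (f := fun p => ‖c p.1 p.2‖ ^ 2)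
      (g := fun _ => t ^ 2) ?_
    · simpa [Finset.sum_const, nsmul_eq_mul] using this
    · intro p hp
      rw [Finset.mem_offDiag] at hp
      have hp3 := hcon p.1 p.2 hp.2.2
      exact pow_lt_pow_left₀ hp3 (norm_nonneg _) (by norm_num)
  have hcard : (((univ : Finset (Fin N)).offDiag.card : ℝ)) = (N:ℝ) * ((N:ℝ) - 1) := by
    rw [Finset.offDiag_card]
    simp only [Finset.card_univ, Fintype.card_fin]
    have hle : N ≤ N * N := Nat.le_mul_of_pos_left N (by omega)
    push_cast [Nat.cast_sub hle]
    ring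
  have hval : ((univ : Finset (Fin N)).offDiag.card : ℝ) * t ^ 2 = (N:ℝ)^2 / r - N := by
    have hrne : (r:ℝ) ≠ 0 := ne_of_gt hr0
    have hN1ne : (N:ℝ) - 1 ≠ 0 := by linarith
    rw [hcard, ht2]
    field_simp
  rw [hval] at hlt
  linarith
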